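/- arXiv:2107.14181 — 3 statements merged into one kernel-verified Lean document; each statement's English description precedes it below -/
import Mathlib

section
/- Define the G-twirl G(ρ) := ∫_G dg U(g) ρ U(g)† with respect to the Haar measure on a compact group G with unitary representation U on a finite-dimensional Hilbert space. Then for any density operators η on H_R and ρ on H_A (with the tensor product representation g ↦ U_R(g) ⊗ U_A(g)), G(G_R(η) ⊗ ρ) = G_R(η) ⊗ G_A(ρ), where G_R and G_A denote the twirls on the individual systems. -/
open Matrix MeasureTheory
open scoped Kronecker ComplexOrder

attribute [local instance] Matrix.normedAddCommGroup Matrix.normedSpace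

/-- The twirl of `M` with respect to the family of unitaries `U g`, averaged over `μ`. -/
noncomputable def twirl {G : Type} [MeasurableSpace G] (μ : Measure G)
    {n : Type} [Fintype n] (U : G → Matrix n n ℂ) (M : Matrix n n ℂ) : Matrix n n ℂ :=
  ∫ g, U g * M * (U g)ᴴ ∂μ

section Aux

lemma integral_linearMap_comm {G : Type} [MeasurableSpace G] {μ : Measure G}
    {E F : Type*} [NormedAddCommGroup E] [NormedSpace ℂ E]
    [NormedAddCommGroup F] [NormedSpace ℂ F] [FiniteDimensional ℂ E] [CompleteSpace F]
    (L : E →ₗ[ℂ] F) {f : G → E} (hf : Integrable f μ) :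
    ∫ g, L (f g) ∂μ = L (∫ g, f g ∂μ) :=
  (LinearMap.toContinuousLinearMap L).integral_comp_comm hf

lemma integrable_conj_aux {G : Type} [TopologicalSpace G] [CompactSpace G]
    [MeasurableSpace G] [BorelSpace G] (μ : Measure G) [IsFiniteMeasure μ]
    {n : Type} [Fintype n] (U : G → Matrix n n ℂ) (hcont : Continuous U)
    (M : Matrix n n ℂ) :
    @Integrable (Matrix n n ℂ) UniformSpace.toTopologicalSpace SeminormedAddGroup.toContinuousENorm
      G _ (fun g => U g * M * (U g)ᴴ) μ := by
  have hc : Continuous (fun g => U g * M * (U g)ᴴ) :=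
    (hcont.matrix_mul continuous_const).matrix_mul hcont.matrix_conjTranspose
  exact hc.integrable_of_hasCompactSupport (HasCompactSupport.of_compactSpace _)

lemma twirl_invariant {G : Type} [Group G] [TopologicalSpace G] [IsTopologicalGroup G]
    [CompactSpace G] [MeasurableSpace G] [BorelSpace G]
    (μ : Measure G) [μ.IsHaarMeasure] [IsProbabilityMeasure μ]
    {n : Type} [Fintype n] [DecidableEq n]
    (U : G → Matrix n n ℂ) (hhom : ∀ g h, U (g * h) = U g * U h)
    (hcont : Continuous U) (M : Matrix n n ℂ) (h : G) :
    U h * twirl μ U M * (U h)ᴴ = twirl μ U M := by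
  have hint := integrable_conj_aux μ U hcont M
  set L : Matrix n n ℂ →ₗ[ℂ] Matrix n n ℂ :=
    (LinearMap.mulRight ℂ ((U h)ᴴ)).comp (LinearMap.mulLeft ℂ (U h)) with hL
  have hLapp : ∀ X, L X = U h * X * (U h)ᴴ := fun X => rfl
  calc U h * twirl μ U M * (U h)ᴴ
      = L (∫ g, U g * M * (U g)ᴴ ∂μ) := by rw [hLapp]; rfl
    _ = ∫ g, L (U g * M * (U g)ᴴ) ∂μ := (integral_linearMap_comm L hint).symm
    _ = ∫ g, U (h * g) * M * (U (h * g))ᴴ ∂μ := by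
        refine integral_congr_ae (Filter.Eventually.of_forall fun g => ?_)
        simp [hLapp, hhom, Matrix.conjTranspose_mul, mul_assoc]
    _ = ∫ g, U g * M * (U g)ᴴ ∂μ :=
        integral_mul_left_eq_self (fun g => U g * M * (U g)ᴴ) h
    _ = twirl μ U M := rfl

lemma kron_conjTranspose {R A : Type} (X : Matrix R R ℂ) (Y : Matrix A A ℂ) :
    (X ⊗ₖ Y)ᴴ = Xᴴ ⊗ₖ Yᴴ := by
  ext ⟨i, j⟩ ⟨k, l⟩
  simp [Matrix.conjTranspose_apply, star_mul']

end Aux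

/-- `G(G_R(η) ⊗ ρ) = G_R(η) ⊗ G_A(ρ)` for the joint twirl with respect to
the representation `g ↦ U_R(g) ⊗ U_A(g)` of a compact group, with Haar probability
measure `μ`. -/
theorem twirl_twirled_product {G : Type} [Group G] [TopologicalSpace G] [IsTopologicalGroup G]
    [CompactSpace G] [MeasurableSpace G] [BorelSpace G]
    (μ : Measure G) [μ.IsHaarMeasure] [IsProbabilityMeasure μ]
    {R A : Type} [Fintype R] [Fintype A] [DecidableEq R] [DecidableEq A]
    (UR : G → Matrix R R ℂ) (UA : G → Matrix A A ℂ)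
    (hURhom : ∀ g h, UR (g * h) = UR g * UR h)
    (hUAhom : ∀ g h, UA (g * h) = UA g * UA h)
    (hURunitary : ∀ g, UR g ∈ Matrix.unitaryGroup R ℂ)
    (hUAunitary : ∀ g, UA g ∈ Matrix.unitaryGroup A ℂ)
    (hURcont : Continuous UR) (hUAcont : Continuous UA)
    (η : Matrix R R ℂ) (hη : η.PosSemidef) (hηtr : Matrix.trace η = 1)
    (ρ : Matrix A A ℂ) (hρ : ρ.PosSemidef) (hρtr : Matrix.trace ρ = 1) :
    twirl μ (fun g => UR g ⊗ₖ UA g) ((twirl μ UR η) ⊗ₖ ρ)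
      = (twirl μ UR η) ⊗ₖ (twirl μ UA ρ) := by
  set T := twirl μ UR η with hT
  have hintA := integrable_conj_aux μ UA hUAcont ρ
  set L : Matrix A A ℂ →ₗ[ℂ] Matrix (R × A) (R × A) ℂ := Matrix.kroneckerBilinear T with hL
  have hLapp : ∀ X, L X = T ⊗ₖ X := fun X => rfl
  calc twirl μ (fun g => UR g ⊗ₖ UA g) (T ⊗ₖ ρ)
      = ∫ g, (UR g ⊗ₖ UA g) * (T ⊗ₖ ρ) * (UR g ⊗ₖ UA g)ᴴ ∂μ := rfl
    _ = ∫ g, L (UA g * ρ * (UA g)ᴴ) ∂μ := by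
        refine integral_congr_ae (Filter.Eventually.of_forall fun g => ?_)
        simp only [hLapp]
        rw [kron_conjTranspose, ← Matrix.mul_kronecker_mul, ← Matrix.mul_kronecker_mul,
          twirl_invariant μ UR hURhom hURcont η g]
    _ = L (∫ g, UA g * ρ * (UA g)ᴴ ∂μ) := integral_linearMap_comm L hintA
    _ = T ⊗ₖ twirl μ UA ρ := by rw [hLapp]; rfl
end

section
/- Let Λ_p(η) := pη + (1-p)·(1/d) for p ∈ [0,1], where d = dim H_R. Define Φ_η(τ) := Φ(G(η ⊗ τ)) with Φ the conditional min-entropy SDP. Then Φ_{Λ_p(η)}(τ) = p·Φ_η(τ) + (1-p)/d. -/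
open Matrix MeasureTheory
open scoped Kronecker ComplexOrder

attribute [local instance] Matrix.normedAddCommGroup Matrix.normedSpace

noncomputable instance matContENorm {m n : Type} [Fintype m] [Fintype n] :
    ContinuousENorm (Matrix m n ℂ) :=
  @SeminormedAddGroup.toContinuousENorm (Matrix m n ℂ)
    inferInstance

/-- The conditional min-entropy SDP functional. -/
noncomputable def Phi {R A : Type} [Fintype R] [Fintype A] [DecidableEq R] [DecidableEq A]
    (M : Matrix (R × A) (R × A) ℂ) : ℝ :=
  sInf {t : ℝ | ∃ X : Matrix A A ℂ, X.PosSemidef ∧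
    ((1 : Matrix R R ℂ) ⊗ₖ X - M).PosSemidef ∧ t = (Matrix.trace X).re}

set_option linter.unusedSectionVars false
set_option linter.unusedVariables false
set_option maxHeartbeats 1000000

section KronAux
variable {R A : Type} [Fintype R] [Fintype A] [DecidableEq R] [DecidableEq A]

lemma kron_conjT (M : Matrix R R ℂ) (N : Matrix A A ℂ) :
    (M ⊗ₖ N)ᴴ = Mᴴ ⊗ₖ Nᴴ := by
  ext ⟨i, k⟩ ⟨j, l⟩
  simp [conjTranspose_apply, Matrix.kroneckerMap_apply, star_mul', mul_comm]

lemma PosSemidef.kron {M : Matrix R R ℂ} {N : Matrix A A ℂ}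
    (hM : M.PosSemidef) (hN : N.PosSemidef) : (M ⊗ₖ N).PosSemidef := by
  exact Matrix.PosSemidef.kronecker hM hN

lemma trace_re_nonneg {n : Type} [Fintype n] [DecidableEq n] {M : Matrix n n ℂ}
    (hM : M.PosSemidef) : 0 ≤ (Matrix.trace M).re := by
  have h : ∀ i, 0 ≤ (M i i).re := by
    intro i
    have := hM.re_dotProduct_nonneg (Pi.single i 1)
    simpa [dotProduct, Matrix.mulVec, Pi.single_apply, Finset.sum_ite_eq,
      Finset.sum_ite_eq'] using this
  simp only [Matrix.trace, Matrix.diag, Complex.re_sum]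
  exact Finset.sum_nonneg fun i _ => h i

lemma posSemidef_smul {n : Type} [Fintype n] {M : Matrix n n ℂ} (hM : M.PosSemidef)
    {r : ℝ} (hr : 0 ≤ r) : (r • M).PosSemidef := by
  rw [Matrix.posSemidef_iff_dotProduct_mulVec]
  refine ⟨?_, fun x => ?_⟩
  · unfold Matrix.IsHermitian
    rw [Matrix.conjTranspose_smul_non_comm]
    · rw [hM.1]; norm_num
    · intros; simp [Complex.real_smul, mul_comm]
  · have := hM.dotProduct_mulVec_nonneg x
    rw [Matrix.smul_mulVec, dotProduct_smul]
    exact smul_nonneg (by exact_mod_cast Complex.zero_le_real.mpr hr) this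

lemma one_kron_sub (Y Z : Matrix A A ℂ) :
    (1 : Matrix R R ℂ) ⊗ₖ (Y - Z) = (1 : Matrix R R ℂ) ⊗ₖ Y - (1 : Matrix R R ℂ) ⊗ₖ Z := by
  ext ⟨i, k⟩ ⟨j, l⟩
  simp [Matrix.kroneckerMap_apply, mul_sub]

lemma posSemidef_of_one_kron [Nonempty R] {Z : Matrix A A ℂ}
    (h : ((1 : Matrix R R ℂ) ⊗ₖ Z).PosSemidef) : Z.PosSemidef := by
  obtain ⟨r⟩ := ‹Nonempty R›
  rw [Matrix.posSemidef_iff_dotProduct_mulVec]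
  constructor
  · have h1 := h.1
    ext i j
    have := congrFun (congrFun h1 (r, i)) (r, j)
    simpa [Matrix.conjTranspose_apply, Matrix.kroneckerMap_apply, Matrix.one_apply] using this
  · intro x
    have := h.dotProduct_mulVec_nonneg (fun q => if q.1 = r then x q.2 else 0)
    simpa [dotProduct, Matrix.mulVec, Fintype.sum_prod_type, Matrix.one_apply,
      ite_mul, mul_ite, Finset.sum_ite_eq, Finset.sum_ite_eq', mul_comm] using this

lemma exists_le_smul_one {n : Type} [Fintype n] [DecidableEq n] {M : Matrix n n ℂ}
    (hM : M.IsHermitian) :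
    ∃ t : ℝ, 0 ≤ t ∧ ((t : ℝ) • (1 : Matrix n n ℂ) - M).PosSemidef := by
  classical
  set t : ℝ := ∑ i, |hM.eigenvalues i| with ht
  have ht0 : 0 ≤ t := Finset.sum_nonneg fun i _ => abs_nonneg _
  refine ⟨t, ht0, ?_⟩
  have hspec := hM.spectral_theorem
  set U : Matrix n n ℂ := (hM.eigenvectorUnitary : Matrix n n ℂ)
  have hU : U * star U = 1 := Matrix.mem_unitaryGroup_iff.mp hM.eigenvectorUnitary.2
  have h1 : (t : ℝ) • (1 : Matrix n n ℂ) - M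
      = U * ((t : ℝ) • (1 : Matrix n n ℂ)
          - Matrix.diagonal (RCLike.ofReal ∘ hM.eigenvalues)) * star U := by
    rw [Matrix.mul_sub, Matrix.sub_mul, Matrix.mul_smul, Matrix.smul_mul, mul_one, hU]
    conv_lhs => rw [hspec]
    rfl
  rw [h1, Matrix.star_eq_conjTranspose]
  apply Matrix.PosSemidef.mul_mul_conjTranspose_same
  have : (t : ℝ) • (1 : Matrix n n ℂ) - Matrix.diagonal (RCLike.ofReal ∘ hM.eigenvalues)
      = Matrix.diagonal (fun i => ((t - hM.eigenvalues i : ℝ) : ℂ)) := by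
    ext i j
    by_cases h : i = j
    · subst h
      simp [Complex.real_smul, Complex.ofReal_sub]
    · simp [Matrix.one_apply_ne h, Matrix.diagonal_apply_ne _ h, h]
  rw [this]
  apply Matrix.PosSemidef.diagonal
  intro i
  simp only [Pi.zero_apply]
  rw [← Complex.ofReal_zero, Complex.real_le_real]
  have : hM.eigenvalues i ≤ t := by
    calc hM.eigenvalues i ≤ |hM.eigenvalues i| := le_abs_self _
    _ ≤ t := Finset.single_le_sum (f := fun i => |hM.eigenvalues i|)
        (fun i _ => abs_nonneg _) (Finset.mem_univ i)
  linarith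

/-- `X ↦ 1 ⊗ₖ X` as an `ℝ`-linear map. -/
noncomputable def oneKronLM : Matrix A A ℂ →ₗ[ℝ] Matrix (R × A) (R × A) ℂ where
  toFun X := (1 : Matrix R R ℂ) ⊗ₖ X
  map_add' X Y := Matrix.kronecker_add _ _ _
  map_smul' r X := Matrix.kronecker_smul _ _ _
end KronAux

section Integ
variable {G : Type} [TopologicalSpace G] [CompactSpace G] [MeasurableSpace G] [BorelSpace G]
  (μ : Measure G) [IsProbabilityMeasure μ]

lemma integrable_of_cont {E : Type} [NormedAddCommGroup E] {f : G → E} (hf : Continuous f) :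
    Integrable f μ :=
  hf.integrable_of_hasCompactSupport (HasCompactSupport.of_compactSpace f)

lemma integral_linearMap {n : Type} [Fintype n] {E : Type} [NormedAddCommGroup E]
    [NormedSpace ℝ E] [CompleteSpace E]
    (L : Matrix n n ℂ →ₗ[ℝ] E) {f : G → Matrix n n ℂ} (hf : Integrable f μ) :
    L (∫ g, f g ∂μ) = ∫ g, L (f g) ∂μ :=
  (LinearMap.toContinuousLinearMap L).integral_comp_comm hf |>.symm

/-- conjTranspose as an `ℝ`-linear map. -/
noncomputable def conjTransposeLM {n : Type} [Fintype n] : Matrix n n ℂ →ₗ[ℝ] Matrix n n ℂ where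
  toFun M := Mᴴ
  map_add' M N := Matrix.conjTranspose_add M N
  map_smul' r M := by
    ext i j
    simp [Matrix.conjTranspose_apply, Complex.real_smul, star_mul', mul_comm]

/-- the quadratic form as an `ℝ`-linear map. -/
noncomputable def quadLM {n : Type} [Fintype n] (x : n → ℂ) : Matrix n n ℂ →ₗ[ℝ] ℂ where
  toFun M := dotProduct (star x) (M *ᵥ x)
  map_add' M N := by simp [Matrix.add_mulVec, dotProduct_add]
  map_smul' r M := by
    simp [Matrix.smul_mulVec, dotProduct_smul]

lemma posSemidef_integral {n : Type} [Fintype n] {f : G → Matrix n n ℂ} (hf : Integrable f μ)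
    (h : ∀ g, (f g).PosSemidef) : (∫ g, f g ∂μ).PosSemidef := by
  rw [Matrix.posSemidef_iff_dotProduct_mulVec]
  constructor
  · have := integral_linearMap μ (conjTransposeLM (n := n)) hf
    unfold Matrix.IsHermitian
    rw [show (∫ g, f g ∂μ)ᴴ = conjTransposeLM (∫ g, f g ∂μ) from rfl, this]
    exact integral_congr_ae (Filter.Eventually.of_forall fun g => (h g).1)
  · intro x
    have hq := integral_linearMap μ (quadLM x) hf
    have hInt : Integrable (fun g => quadLM x (f g)) μ :=
      (LinearMap.toContinuousLinearMap (quadLM x)).integrable_comp hf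
    rw [show dotProduct (star x) ((∫ g, f g ∂μ) *ᵥ x)
      = quadLM x (∫ g, f g ∂μ) from rfl, hq]
    have h0 : ∀ g, 0 ≤ quadLM x (f g) := fun g => (h g).dotProduct_mulVec_nonneg x
    rw [Complex.le_def]
    constructor
    · simp only [Complex.zero_re]
      rw [← RCLike.re_eq_complex_re, ← integral_re hInt]
      exact integral_nonneg fun g => by
        have := (Complex.le_def.mp (h0 g)).1
        simpa using this
    · simp only [Complex.zero_im]
      rw [← RCLike.im_eq_complex_im, ← integral_im hInt]
      symm
      rw [show (0:ℝ) = ∫ _g, (0:ℝ) ∂μ by simp]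
      exact integral_congr_ae (Filter.Eventually.of_forall fun g => by
        have := (Complex.le_def.mp (h0 g)).2
        simpa using this.symm)

variable {R A : Type} [Fintype R] [Fintype A] [DecidableEq R] [DecidableEq A]
  {UR : G → Matrix R R ℂ} {UA : G → Matrix A A ℂ}

lemma cont_kron (hURcont : Continuous UR) (hUAcont : Continuous UA) :
    Continuous (fun g => UR g ⊗ₖ UA g) := by
  apply continuous_matrix
  rintro ⟨i, k⟩ ⟨j, l⟩
  exact (hURcont.matrix_elem i j).mul (hUAcont.matrix_elem k l)

lemma cont_twirl_integrand (hURcont : Continuous UR) (hUAcont : Continuous UA)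
    (M : Matrix (R × A) (R × A) ℂ) :
    Continuous (fun g => (UR g ⊗ₖ UA g) * M * (UR g ⊗ₖ UA g)ᴴ) := by
  have h := cont_kron hURcont hUAcont
  exact (h.matrix_mul continuous_const).matrix_mul h.matrix_conjTranspose

lemma twirl_add_smul (hURcont : Continuous UR) (hUAcont : Continuous UA)
    (M N : Matrix (R × A) (R × A) ℂ) (a b : ℝ) :
    twirl μ (fun g => UR g ⊗ₖ UA g) (a • M + b • N)
      = a • twirl μ (fun g => UR g ⊗ₖ UA g) M + b • twirl μ (fun g => UR g ⊗ₖ UA g) N := by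
  unfold twirl
  have h1 : ∀ (K : Matrix (R × A) (R × A) ℂ),
      Integrable (fun g => (UR g ⊗ₖ UA g) * K * (UR g ⊗ₖ UA g)ᴴ) μ :=
    fun K => integrable_of_cont μ (cont_twirl_integrand hURcont hUAcont K)
  calc ∫ g, (UR g ⊗ₖ UA g) * (a • M + b • N) * (UR g ⊗ₖ UA g)ᴴ ∂μ
      = ∫ g, (a • ((UR g ⊗ₖ UA g) * M * (UR g ⊗ₖ UA g)ᴴ)
          + b • ((UR g ⊗ₖ UA g) * N * (UR g ⊗ₖ UA g)ᴴ)) ∂μ := by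
        apply integral_congr_ae
        apply Filter.Eventually.of_forall
        intro g
        beta_reduce
        rw [Matrix.mul_add, Matrix.add_mul, Matrix.mul_smul, Matrix.mul_smul,
          Matrix.smul_mul, Matrix.smul_mul]
    _ = (∫ g, a • ((UR g ⊗ₖ UA g) * M * (UR g ⊗ₖ UA g)ᴴ) ∂μ)
          + ∫ g, b • ((UR g ⊗ₖ UA g) * N * (UR g ⊗ₖ UA g)ᴴ) ∂μ :=
        integral_add ((h1 M).smul a) ((h1 N).smul b)
    _ = a • (∫ g, (UR g ⊗ₖ UA g) * M * (UR g ⊗ₖ UA g)ᴴ ∂μ)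
          + b • ∫ g, (UR g ⊗ₖ UA g) * N * (UR g ⊗ₖ UA g)ᴴ ∂μ := by
        rw [integral_smul, integral_smul]

lemma twirl_one_kron (hUAcont : Continuous UA)
    (hURunitary : ∀ g, UR g ∈ Matrix.unitaryGroup R ℂ) (τ : Matrix A A ℂ) :
    twirl μ (fun g => UR g ⊗ₖ UA g) ((1 : Matrix R R ℂ) ⊗ₖ τ)
      = (1 : Matrix R R ℂ) ⊗ₖ (∫ g, UA g * τ * (UA g)ᴴ ∂μ) := by
  unfold twirl
  have hint : Integrable (fun g => UA g * τ * (UA g)ᴴ) μ :=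
    integrable_of_cont μ ((hUAcont.matrix_mul continuous_const).matrix_mul
      hUAcont.matrix_conjTranspose)
  have key : ∀ g, (UR g ⊗ₖ UA g) * ((1 : Matrix R R ℂ) ⊗ₖ τ) * (UR g ⊗ₖ UA g)ᴴ
      = oneKronLM (UA g * τ * (UA g)ᴴ) := by
    intro g
    have hU : UR g * (UR g)ᴴ = 1 := by
      have := Matrix.mem_unitaryGroup_iff.mp (hURunitary g)
      rwa [Matrix.star_eq_conjTranspose] at this
    show _ = (1 : Matrix R R ℂ) ⊗ₖ _
    rw [kron_conjT, ← Matrix.mul_kronecker_mul, ← Matrix.mul_kronecker_mul, Matrix.mul_one, hU]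
  rw [integral_congr_ae (Filter.Eventually.of_forall key),
    ← integral_linearMap μ (oneKronLM (R := R) (A := A)) hint]
  rfl

lemma sigma_trace (hUAcont : Continuous UA)
    (hUAunitary : ∀ g, UA g ∈ Matrix.unitaryGroup A ℂ) (τ : Matrix A A ℂ)
    (hτtr : Matrix.trace τ = 1) :
    Matrix.trace (∫ g, UA g * τ * (UA g)ᴴ ∂μ) = 1 := by
  have hint : Integrable (fun g => UA g * τ * (UA g)ᴴ) μ :=
    integrable_of_cont μ ((hUAcont.matrix_mul continuous_const).matrix_mul
      hUAcont.matrix_conjTranspose)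
  rw [show Matrix.trace (∫ g, UA g * τ * (UA g)ᴴ ∂μ)
      = ((Matrix.traceLinearMap A ℂ ℂ).restrictScalars ℝ) (∫ g, UA g * τ * (UA g)ᴴ ∂μ) from rfl,
    integral_linearMap μ _ hint]
  have key : ∀ g, ((Matrix.traceLinearMap A ℂ ℂ).restrictScalars ℝ) (UA g * τ * (UA g)ᴴ)
      = (1 : ℂ) := by
    intro g
    have hU : (UA g)ᴴ * UA g = 1 := by
      have := Matrix.mem_unitaryGroup_iff'.mp (hUAunitary g)
      rwa [Matrix.star_eq_conjTranspose] at this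
    show Matrix.trace (UA g * τ * (UA g)ᴴ) = 1
    rw [Matrix.trace_mul_cycle, hU, Matrix.one_mul, hτtr]
  rw [integral_congr_ae (Filter.Eventually.of_forall key)]
  simp
end Integ

section PhiAux
variable {R A : Type} [Fintype R] [Fintype A] [DecidableEq R] [DecidableEq A]

lemma Phi_of_isEmpty [IsEmpty R] (M : Matrix (R × A) (R × A) ℂ) : Phi M = 0 := by
  have hpsd : ∀ (K : Matrix (R × A) (R × A) ℂ), K.PosSemidef := by
    intro K
    constructor
    · ext ⟨r, a⟩ q
      exact isEmptyElim r
    · intro x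
      simp [Subsingleton.elim x 0]
  unfold Phi
  apply le_antisymm
  · exact csInf_le ⟨0, fun t ⟨X, hX, _, ht⟩ => ht ▸ trace_re_nonneg hX⟩
      ⟨0, Matrix.PosSemidef.zero, hpsd _, by simp⟩
  · exact le_csInf ⟨0, ⟨0, Matrix.PosSemidef.zero, hpsd _, by simp⟩⟩
      fun t ⟨X, hX, _, ht⟩ => ht ▸ trace_re_nonneg hX
end PhiAux

/-- with `Λ_p(η) := p η + (1-p) 𝟙/d` and `Φ_η(τ) := Φ(G(η ⊗ τ))`,
one has `Φ_{Λ_p(η)}(τ) = p Φ_η(τ) + (1-p)/d`. -/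
theorem Phi_depolarized_reference {G : Type} [Group G] [TopologicalSpace G]
    [IsTopologicalGroup G] [CompactSpace G] [MeasurableSpace G] [BorelSpace G]
    (μ : Measure G) [μ.IsHaarMeasure] [IsProbabilityMeasure μ]
    {R A : Type} [Fintype R] [Fintype A] [DecidableEq R] [DecidableEq A]
    (UR : G → Matrix R R ℂ) (UA : G → Matrix A A ℂ)
    (hURhom : ∀ g h, UR (g * h) = UR g * UR h)
    (hUAhom : ∀ g h, UA (g * h) = UA g * UA h)
    (hURunitary : ∀ g, UR g ∈ Matrix.unitaryGroup R ℂ)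
    (hUAunitary : ∀ g, UA g ∈ Matrix.unitaryGroup A ℂ)
    (hURcont : Continuous UR) (hUAcont : Continuous UA)
    (η : Matrix R R ℂ) (hη : η.PosSemidef) (hηtr : Matrix.trace η = 1)
    (τ : Matrix A A ℂ) (hτ : τ.PosSemidef) (hτtr : Matrix.trace τ = 1)
    (p : ℝ) (hp0 : 0 ≤ p) (hp1 : p ≤ 1) :
    Phi (twirl μ (fun g => UR g ⊗ₖ UA g)
        ((p • η + ((1 - p) * (Fintype.card R : ℝ)⁻¹) • (1 : Matrix R R ℂ)) ⊗ₖ τ))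
      = p * Phi (twirl μ (fun g => UR g ⊗ₖ UA g) (η ⊗ₖ τ))
        + (1 - p) / (Fintype.card R : ℝ) := by
  rcases isEmpty_or_nonempty R with hR | hR
  · rw [Phi_of_isEmpty, Phi_of_isEmpty]
    simp [Fintype.card_eq_zero]
  -- the nonempty case
  set c : ℝ := (1 - p) * (Fintype.card R : ℝ)⁻¹ with hc
  have hd0 : (0 : ℝ) < (Fintype.card R : ℝ) := by
    exact_mod_cast Fintype.card_pos
  have hc0 : 0 ≤ c := mul_nonneg (by linarith) (by positivity)
  have hcdiv : (1 - p) / (Fintype.card R : ℝ) = c := div_eq_mul_inv _ _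
  set σ : Matrix A A ℂ := ∫ g, UA g * τ * (UA g)ᴴ ∂μ with hσdef
  set M : Matrix (R × A) (R × A) ℂ := twirl μ (fun g => UR g ⊗ₖ UA g) (η ⊗ₖ τ) with hMdef
  -- twirl decomposition
  have hdecomp : twirl μ (fun g => UR g ⊗ₖ UA g)
      ((p • η + c • (1 : Matrix R R ℂ)) ⊗ₖ τ) = p • M + c • ((1 : Matrix R R ℂ) ⊗ₖ σ) := by
    rw [Matrix.add_kronecker, Matrix.smul_kronecker, Matrix.smul_kronecker,
      twirl_add_smul μ hURcont hUAcont, twirl_one_kron μ hUAcont hURunitary]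
  rw [hdecomp, hcdiv]
  -- basic facts
  have hIntσ : Integrable (fun g => UA g * τ * (UA g)ᴴ) μ :=
    integrable_of_cont μ ((hUAcont.matrix_mul continuous_const).matrix_mul
      hUAcont.matrix_conjTranspose)
  have hσpsd : σ.PosSemidef :=
    posSemidef_integral μ hIntσ fun g => hτ.mul_mul_conjTranspose_same (UA g)
  have hσtr : Matrix.trace σ = 1 := sigma_trace μ hUAcont hUAunitary τ hτtr
  have hMpsd : M.PosSemidef := by
    rw [hMdef]
    exact posSemidef_integral μ
      (integrable_of_cont μ (cont_twirl_integrand hURcont hUAcont _))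
      fun g => (PosSemidef.kron hη hτ).mul_mul_conjTranspose_same _
  -- the feasible set of M
  set S : Set ℝ := {t : ℝ | ∃ X : Matrix A A ℂ, X.PosSemidef ∧
    ((1 : Matrix R R ℂ) ⊗ₖ X - M).PosSemidef ∧ t = (Matrix.trace X).re} with hS
  have hSbd : BddBelow S := ⟨0, fun t ⟨X, hX, _, ht⟩ => ht ▸ trace_re_nonneg hX⟩
  have hSne : S.Nonempty := by
    obtain ⟨t₀, ht₀, hpsd⟩ := exists_le_smul_one hMpsd.1
    refine ⟨(Matrix.trace (t₀ • (1 : Matrix A A ℂ))).re, t₀ • 1,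
      posSemidef_smul Matrix.PosSemidef.one ht₀, ?_, rfl⟩
    rwa [Matrix.kronecker_smul, Matrix.one_kronecker_one]
  rcases eq_or_lt_of_le hp0 with hp | hp
  · -- p = 0
    rw [← hp]
    simp only [zero_smul, zero_add, zero_mul]
    have hfeas : ((1 : Matrix R R ℂ) ⊗ₖ (c • σ)
        - c • ((1 : Matrix R R ℂ) ⊗ₖ σ)).PosSemidef := by
      rw [Matrix.kronecker_smul, sub_self]
      exact Matrix.PosSemidef.zero
    have htr : (Matrix.trace (c • σ)).re = c := by
      rw [Matrix.trace_smul, hσtr]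
      simp [Complex.real_smul]
    unfold Phi
    apply le_antisymm
    · exact csInf_le ⟨0, fun t ⟨X, hX, _, ht⟩ => ht ▸ trace_re_nonneg hX⟩
        ⟨c • σ, posSemidef_smul hσpsd hc0, hfeas, htr.symm⟩
    · refine le_csInf ⟨c, c • σ, posSemidef_smul hσpsd hc0, hfeas, htr.symm⟩ ?_
      rintro t ⟨X, hX, hf, rfl⟩
      have hXσ : (X - c • σ).PosSemidef := by
        apply posSemidef_of_one_kron (R := R)
        rwa [one_kron_sub, Matrix.kronecker_smul]
      have := trace_re_nonneg hXσ
      rw [Matrix.trace_sub, Matrix.trace_smul, hσtr, Complex.sub_re] at this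
      simp only [Complex.real_smul, mul_one, Complex.ofReal_re] at this
      linarith
  · -- p > 0
    have himage : {t : ℝ | ∃ X : Matrix A A ℂ, X.PosSemidef ∧
        ((1 : Matrix R R ℂ) ⊗ₖ X - (p • M + c • ((1 : Matrix R R ℂ) ⊗ₖ σ))).PosSemidef ∧
        t = (Matrix.trace X).re} = (fun t => p * t + c) '' S := by
      ext t'
      constructor
      · rintro ⟨Y, hY, hfeas', rfl⟩
        set Z : Matrix A A ℂ := Y - c • σ with hZ
        have h1 : (1 : Matrix R R ℂ) ⊗ₖ Z - p • M
            = (1 : Matrix R R ℂ) ⊗ₖ Y - (p • M + c • ((1 : Matrix R R ℂ) ⊗ₖ σ)) := by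
          rw [hZ, one_kron_sub, Matrix.kronecker_smul]
          abel
        have hfeasZ : ((1 : Matrix R R ℂ) ⊗ₖ Z - p • M).PosSemidef := h1 ▸ hfeas'
        have hZkron : ((1 : Matrix R R ℂ) ⊗ₖ Z).PosSemidef := by
          have := hfeasZ.add (posSemidef_smul hMpsd hp0)
          rwa [sub_add_cancel] at this
        have hZpsd : Z.PosSemidef := posSemidef_of_one_kron hZkron
        set X : Matrix A A ℂ := p⁻¹ • Z with hX
        have hXpsd : X.PosSemidef := posSemidef_smul hZpsd (by positivity)
        have hXfeas : ((1 : Matrix R R ℂ) ⊗ₖ X - M).PosSemidef := by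
          have hpp : p⁻¹ • (p • M) = M := by
            rw [smul_smul, inv_mul_cancel₀ hp.ne', one_smul]
          rw [hX, Matrix.kronecker_smul, show (p⁻¹ • ((1 : Matrix R R ℂ) ⊗ₖ Z) - M)
            = p⁻¹ • ((1 : Matrix R R ℂ) ⊗ₖ Z - p • M) by rw [smul_sub, hpp]]
          exact posSemidef_smul hfeasZ (by positivity)
        refine ⟨(Matrix.trace X).re, ⟨X, hXpsd, hXfeas, rfl⟩, ?_⟩
        have : (Matrix.trace X).re = p⁻¹ * ((Matrix.trace Y).re - c) := by
          rw [hX, Matrix.trace_smul, hZ, Matrix.trace_sub, Matrix.trace_smul, hσtr]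
          simp [Complex.real_smul, Complex.sub_re, Complex.re_ofReal_mul]
        rw [this]
        field_simp
        ring
      · rintro ⟨t₀, ⟨X, hX, hfeas, rfl⟩, rfl⟩
        refine ⟨p • X + c • σ, (posSemidef_smul hX hp0).add (posSemidef_smul hσpsd hc0), ?_, ?_⟩
        · have h2 : (1 : Matrix R R ℂ) ⊗ₖ (p • X + c • σ)
              - (p • M + c • ((1 : Matrix R R ℂ) ⊗ₖ σ))
              = p • ((1 : Matrix R R ℂ) ⊗ₖ X - M) := by
            rw [Matrix.kronecker_add, Matrix.kronecker_smul, Matrix.kronecker_smul, smul_sub]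
            abel
          rw [h2]
          exact posSemidef_smul hfeas hp0
        · rw [Matrix.trace_add, Matrix.trace_smul, Matrix.trace_smul, hσtr]
          simp [Complex.real_smul, Complex.add_re, Complex.re_ofReal_mul]
    show sInf _ = p * sInf S + c
    rw [himage]
    have hmono : Monotone (fun t => p * t + c) := fun a b hab => by
      simp only
      have := mul_le_mul_of_nonneg_left hab hp0
      linarith
    have hcont : ContinuousAt (fun t => p * t + c) (sInf S) := by fun_prop
    exact (Monotone.map_csInf_of_continuousAt hcont hmono hSne hSbd).symm
end

section
/- Data-processing: let E_R be a unital completely positive trace-preserving map on B(H_R) and N_A a completely positive trace-preserving map from B(H_A) to B(H_B). Then for any positive semidefinite bipartite M, Φ((E_R ⊗ id)(M)) ≤ Φ(M) and Φ((id ⊗ N_A)(M)) ≤ Φ(M), where Φ(M) := inf { Tr[X] : X ≥ 0, 1 ⊗ X ≥ M }. -/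
open Matrix
open scoped Kronecker ComplexOrder

/-- Ampliation `id_R ⊗ L` of a linear map acting on the second tensor factor. -/
def amplA {R A B : Type} (L : Matrix A A ℂ →ₗ[ℂ] Matrix B B ℂ)
    (M : Matrix (R × A) (R × A) ℂ) : Matrix (R × B) (R × B) ℂ :=
  fun p q => L (Matrix.of fun a b => M (p.1, a) (q.1, b)) p.2 q.2

/-- Ampliation `L ⊗ id_A` of a linear map acting on the first tensor factor. -/
def amplR {R R' A : Type} (L : Matrix R R ℂ →ₗ[ℂ] Matrix R' R' ℂ)
    (M : Matrix (R × A) (R × A) ℂ) : Matrix (R' × A) (R' × A) ℂ :=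
  fun p q => L (Matrix.of fun r r' => M (r, p.2) (r', q.2)) p.1 q.1

/-- Complete positivity of a linear map between matrix algebras. -/
def IsCompletelyPositive {A B : Type} [Fintype A] [Fintype B]
    (L : Matrix A A ℂ →ₗ[ℂ] Matrix B B ℂ) : Prop :=
  ∀ (k : Type) [Fintype k] [DecidableEq k],
    ∀ M : Matrix (k × A) (k × A) ℂ, M.PosSemidef → (amplA L M).PosSemidef

-- key analytic lemma: for PSD M, trace M • 1 - M is PSD
lemma trace_smul_one_sub_posSemidef {n : Type} [Fintype n] [DecidableEq n]
    {M : Matrix n n ℂ} (hM : M.PosSemidef) :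
    ((Matrix.trace M) • (1 : Matrix n n ℂ) - M).PosSemidef := by
  obtain ⟨B, rfl⟩ : ∃ B : Matrix n n ℂ, M = Bᴴ * B := by
    open scoped MatrixOrder in
    exact ⟨CFC.sqrt M, by rw [← Matrix.star_eq_conjTranspose,
      (IsSelfAdjoint.of_nonneg (CFC.sqrt_nonneg M)).star_eq, CFC.sqrt_mul_sqrt_self M hM.nonneg]⟩
  set M := Bᴴ * B with hMdef
  have htr : Matrix.trace M = ((∑ i, ∑ j, Complex.normSq (B i j) : ℝ) : ℂ) := by
    simp only [Matrix.trace, Matrix.diag, hMdef, Matrix.mul_apply,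
      Matrix.conjTranspose_apply]
    push_cast
    rw [Finset.sum_comm]
    congr 1; ext j; congr 1; ext i
    rw [Complex.normSq_eq_conj_mul_self]; rfl
  refine Matrix.PosSemidef.of_dotProduct_mulVec_nonneg ?_ ?_
  · have h1 : ((Matrix.trace M) • (1 : Matrix n n ℂ))ᴴ = (Matrix.trace M) • 1 := by
      rw [Matrix.conjTranspose_smul, Matrix.conjTranspose_one, htr]
      simp [Complex.conj_ofReal]
    rw [Matrix.IsHermitian, Matrix.conjTranspose_sub, h1, hM.1.eq]
  · intro x
    have hform : star x ⬝ᵥ (((Matrix.trace M) • (1 : Matrix n n ℂ) - M) *ᵥ x)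
        = Matrix.trace M * (star x ⬝ᵥ x) - star x ⬝ᵥ (M *ᵥ x) := by
      rw [Matrix.sub_mulVec, dotProduct_sub, Matrix.smul_mulVec,
        Matrix.one_mulVec, dotProduct_smul, smul_eq_mul]
    have hxx : star x ⬝ᵥ x = ((∑ j, Complex.normSq (x j) : ℝ) : ℂ) := by
      simp only [dotProduct, Pi.star_apply]
      push_cast
      congr 1; ext j; rw [Complex.normSq_eq_conj_mul_self]; rfl
    have hMx : star x ⬝ᵥ (M *ᵥ x) = ((∑ i, Complex.normSq ((B *ᵥ x) i) : ℝ) : ℂ) := by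
      rw [hMdef, ← Matrix.mulVec_mulVec, Matrix.dotProduct_mulVec, Matrix.vecMul_conjTranspose,
        star_star]
      simp only [dotProduct, Pi.star_apply]
      push_cast
      congr 1; ext i; rw [Complex.normSq_eq_conj_mul_self]; rfl
    rw [hform, hxx, hMx, htr]
    rw [← Complex.ofReal_mul, ← Complex.ofReal_sub]
    rw [Complex.zero_le_real]
    rw [sub_nonneg]
    -- Cauchy-Schwarz per row
    calc ∑ i, Complex.normSq ((B *ᵥ x) i)
        ≤ ∑ i, (∑ j, Complex.normSq (B i j)) * (∑ j, Complex.normSq (x j)) := by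
          apply Finset.sum_le_sum
          intro i _
          have h1 : ‖(B *ᵥ x) i‖ ≤ ∑ j, ‖B i j‖ * ‖x j‖ := by
            rw [Matrix.mulVec, dotProduct]
            refine le_trans (norm_sum_le _ _) ?_
            exact Finset.sum_le_sum fun j _ => le_of_eq (norm_mul _ _)
          have h2 : (∑ j, ‖B i j‖ * ‖x j‖) ^ 2
              ≤ (∑ j, ‖B i j‖ ^ 2) * (∑ j, ‖x j‖ ^ 2) :=
            Finset.sum_mul_sq_le_sq_mul_sq _ _ _
          have h3 : Complex.normSq ((B *ᵥ x) i) = ‖(B *ᵥ x) i‖ ^ 2 :=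
            (Complex.sq_norm _).symm
          rw [h3]
          calc ‖(B *ᵥ x) i‖ ^ 2
              ≤ (∑ j, ‖B i j‖ * ‖x j‖) ^ 2 := by
                apply pow_le_pow_left₀ (norm_nonneg _) h1
            _ ≤ (∑ j, ‖B i j‖ ^ 2) * (∑ j, ‖x j‖ ^ 2) := h2
            _ = (∑ j, Complex.normSq (B i j)) * (∑ j, Complex.normSq (x j)) := by
                simp [Complex.sq_norm]
      _ = (∑ i, ∑ j, Complex.normSq (B i j)) * (∑ j, Complex.normSq (x j)) := by
          rw [← Finset.sum_mul]

section Helpers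

variable {R A B : Type}

lemma amplA_sub [Fintype A] (L : Matrix A A ℂ →ₗ[ℂ] Matrix B B ℂ)
    (M M' : Matrix (R × A) (R × A) ℂ) :
    amplA L (M - M') = amplA L M - amplA L M' := by
  ext p q
  have h : (Matrix.of fun a b => (M - M') (p.1, a) (q.1, b))
      = (Matrix.of fun a b => M (p.1, a) (q.1, b)) - (Matrix.of fun a b => M' (p.1, a) (q.1, b)) := by
    ext a b; simp
  simp only [amplA]
  rw [h, map_sub]
  rfl

lemma amplR_sub [Fintype R] (L : Matrix R R ℂ →ₗ[ℂ] Matrix R R ℂ)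
    (M M' : Matrix (R × A) (R × A) ℂ) :
    amplR L (M - M') = amplR L M - amplR L M' := by
  ext p q
  have h : (Matrix.of fun r r' => (M - M') (r, p.2) (r', q.2))
      = (Matrix.of fun r r' => M (r, p.2) (r', q.2)) - (Matrix.of fun r r' => M' (r, p.2) (r', q.2)) := by
    ext a b; simp
  simp only [amplR]
  rw [h, map_sub]
  rfl

open scoped Kronecker in
lemma amplA_one_kron [Fintype A] [Fintype R] [DecidableEq R]
    (L : Matrix A A ℂ →ₗ[ℂ] Matrix B B ℂ) (X : Matrix A A ℂ) :
    amplA L ((1 : Matrix R R ℂ) ⊗ₖ X) = (1 : Matrix R R ℂ) ⊗ₖ (L X) := by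
  ext p q
  simp only [amplA, Matrix.kroneckerMap_apply]
  rw [show (Matrix.of fun a b => (1 : Matrix R R ℂ) p.1 q.1 * X a b)
      = ((1 : Matrix R R ℂ) p.1 q.1) • X from by ext a b; simp, _root_.map_smul]
  simp

open scoped Kronecker in
lemma amplR_one_kron [Fintype A] [Fintype R] [DecidableEq R]
    (E : Matrix R R ℂ →ₗ[ℂ] Matrix R R ℂ) (hEunital : E 1 = 1) (X : Matrix A A ℂ) :
    amplR E ((1 : Matrix R R ℂ) ⊗ₖ X) = (1 : Matrix R R ℂ) ⊗ₖ X := by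
  ext p q
  simp only [amplR, Matrix.kroneckerMap_apply]
  rw [show (Matrix.of fun r r' => (1 : Matrix R R ℂ) r r' * X p.2 q.2)
      = (X p.2 q.2) • (1 : Matrix R R ℂ) from by ext a b; simp [mul_comm], _root_.map_smul, hEunital]
  simp [mul_comm]

lemma amplR_posSemidef [Fintype A] [Fintype R]
    (E : Matrix R R ℂ →ₗ[ℂ] Matrix R R ℂ) (hECP : IsCompletelyPositive E)
    [DecidableEq A]
    {M : Matrix (R × A) (R × A) ℂ} (hM : M.PosSemidef) :
    (amplR E M).PosSemidef := by
  have h1 : (M.submatrix (Prod.swap : A × R → R × A) Prod.swap).PosSemidef :=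
    hM.submatrix _
  have h2 := hECP A (M.submatrix (Prod.swap : A × R → R × A) Prod.swap) h1
  have h3 := h2.submatrix (Prod.swap : R × A → A × R)
  convert h3 using 2
  rfl

lemma map_posSemidef [Fintype A] [Fintype B] [DecidableEq A] [DecidableEq B]
    (N : Matrix A A ℂ →ₗ[ℂ] Matrix B B ℂ) (hNCP : IsCompletelyPositive N)
    {X : Matrix A A ℂ} (hX : X.PosSemidef) : (N X).PosSemidef := by
  have h1 : (X.submatrix (Prod.snd : Unit × A → A) Prod.snd).PosSemidef := hX.submatrix _
  have h2 := hNCP Unit _ h1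
  have h3 := h2.submatrix (fun b : B => (((), b) : Unit × B))
  convert h3 using 2
  rfl

end Helpers

/-- data processing for `Φ` under a unital CPTP map on `R` and a CPTP map
on `A`. -/
theorem Phi_data_processing {R A B : Type} [Fintype R] [Fintype A] [Fintype B]
    [DecidableEq R] [DecidableEq A] [DecidableEq B]
    (E : Matrix R R ℂ →ₗ[ℂ] Matrix R R ℂ)
    (hECP : IsCompletelyPositive E)
    (hETP : ∀ X, Matrix.trace (E X) = Matrix.trace X)
    (hEunital : E 1 = 1)
    (N : Matrix A A ℂ →ₗ[ℂ] Matrix B B ℂ)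
    (hNCP : IsCompletelyPositive N)
    (hNTP : ∀ X, Matrix.trace (N X) = Matrix.trace X)
    (M : Matrix (R × A) (R × A) ℂ) (hM : M.PosSemidef) :
    Phi (amplR E M) ≤ Phi M ∧ Phi (amplA N M) ≤ Phi M := by
  -- the feasible set of M is nonempty
  have hne : {t : ℝ | ∃ X : Matrix A A ℂ, X.PosSemidef ∧
      ((1 : Matrix R R ℂ) ⊗ₖ X - M).PosSemidef ∧ t = (Matrix.trace X).re}.Nonempty := by
    refine ⟨(Matrix.trace ((Matrix.trace M) • (1 : Matrix A A ℂ))).re,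
      (Matrix.trace M) • 1, ?_, ?_, rfl⟩
    · have htr : (0 : ℂ) ≤ Matrix.trace M := by
        rw [Matrix.trace]
        apply Finset.sum_nonneg
        intro i _
        have := hM.dotProduct_mulVec_nonneg (Pi.single i 1)
        simpa [dotProduct, Matrix.mulVec, Pi.single_apply, mul_ite, ite_mul,
          Finset.sum_ite_eq, Finset.sum_ite_eq', apply_ite (starRingEnd ℂ)] using this
      have : ((Matrix.trace M) • (1 : Matrix A A ℂ)) = Matrix.diagonal (fun _ => Matrix.trace M) := by
        rw [Matrix.smul_one_eq_diagonal]
      rw [this]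
      exact Matrix.PosSemidef.diagonal (fun _ => htr)
    · have : (1 : Matrix R R ℂ) ⊗ₖ ((Matrix.trace M) • (1 : Matrix A A ℂ))
          = (Matrix.trace M) • (1 : Matrix (R × A) (R × A) ℂ) := by
        rw [Matrix.kronecker_smul, Matrix.one_kronecker_one]
      rw [this]
      exact trace_smul_one_sub_posSemidef hM
  -- both feasible sets are bounded below by 0
  have hbdd : ∀ (C : Type) [Fintype C] [DecidableEq C] (M' : Matrix (R × C) (R × C) ℂ),
      BddBelow {t : ℝ | ∃ X : Matrix C C ℂ, X.PosSemidef ∧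
        ((1 : Matrix R R ℂ) ⊗ₖ X - M').PosSemidef ∧ t = (Matrix.trace X).re} := by
    intro C _ _ M'
    refine ⟨0, fun t ht => ?_⟩
    obtain ⟨X, hX, -, rfl⟩ := ht
    rw [Matrix.trace, Complex.re_sum]
    apply Finset.sum_nonneg
    intro i _
    have := hX.re_dotProduct_nonneg (Pi.single i 1)
    simpa [dotProduct, Matrix.mulVec, Pi.single_apply, mul_ite, ite_mul,
      Finset.sum_ite_eq, Finset.sum_ite_eq', apply_ite (starRingEnd ℂ)] using this
  rw [Phi, Phi, Phi]
  constructor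
  · apply csInf_le_csInf (hbdd A (amplR E M)) hne
    rintro t ⟨X, hX, hfeas, rfl⟩
    refine ⟨X, hX, ?_, rfl⟩
    have : (1 : Matrix R R ℂ) ⊗ₖ X - amplR E M = amplR E ((1 : Matrix R R ℂ) ⊗ₖ X - M) := by
      rw [amplR_sub, amplR_one_kron E hEunital]
    rw [this]
    exact amplR_posSemidef E hECP hfeas
  · apply csInf_le_csInf (hbdd B (amplA N M)) hne
    rintro t ⟨X, hX, hfeas, rfl⟩
    refine ⟨N X, map_posSemidef N hNCP hX, ?_, ?_⟩
    · have : (1 : Matrix R R ℂ) ⊗ₖ (N X) - amplA N M = amplA N ((1 : Matrix R R ℂ) ⊗ₖ X - M) := by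
        rw [amplA_sub, amplA_one_kron]
      rw [this]
      exact hNCP R _ hfeas
    · rw [hNTP]
end
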